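/- arXiv:2305.11758 — 2 statements merged into one kernel-verified Lean document; each statement's English description precedes it below -/
import Mathlib

section
/- Lemma 1: let η be an assignment that is individually rational, non-wasteful, within-category fair, and satisfies the over-and-above principle. Then the matching μ induced by η is stable with respect to the profile of over-and-above choice rules (C_s^OA)_{s∈S}: (1) every individual i weakly prefers μ(i) to being unassigned; (2) for every institution s, C_s^OA(μ(s)) = μ(s) (where C_s^OA(A) denotes the chosen set of individuals); and (3) there is no pair (i, s) with s P_i μ(i) and i ∈ C_s^OA(μ(s) ∪ {i}). -/
open Finset

/- `α` : individuals, `σ` : institutions, `ρ` : reserve categories.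
Merit at institution `s` is given by an injective score `score s : α → ℕ`
(higher score = higher merit, `i ≻_s j` iff `score s j < score s i`).
Reported category membership is `τ : α → Option ρ` (`none` = general
category).  Preferences of individual `i` over `Option σ` (`none` = being
unassigned) are given by an injective utility `ui i : Option σ → ℕ`. -/
variable {α σ ρ : Type*} [Fintype α] [DecidableEq α]
  [Fintype σ] [DecidableEq σ] [Fintype ρ] [DecidableEq ρ]

/-- The top-`k` elements of `A` under score `f`: members of `A` with fewer
than `k` strictly higher-scored elements of `A` (all of `A` if `|A| ≤ k`). -/
def topk (k : ℕ) (f : α → ℕ) (A : Finset α) : Finset α :=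
  A.filter fun i => (A.filter fun j => f i < f j).card < k

/-- Open-category selection of institution `s`'s over-and-above choice rule. -/
def oaOpen (acc : σ → Finset α) (score : σ → α → ℕ) (qo : σ → ℕ)
    (s : σ) (A : Finset α) : Finset α :=
  topk (qo s) (score s) (A ∩ acc s)

/-- Category-`r` selection of institution `s`'s over-and-above choice rule. -/
def oaRes (acc : σ → Finset α) (score : σ → α → ℕ) (qo : σ → ℕ)
    (q : σ → ρ → ℕ) (τ : α → Option ρ) (s : σ) (r : ρ) (A : Finset α) :
    Finset α :=
  topk (q s r) (score s)
    (((A ∩ acc s) \ oaOpen acc score qo s A).filter fun i => τ i = some r)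

/-- The set chosen by institution `s`'s over-and-above choice rule. -/
def oaChosen (acc : σ → Finset α) (score : σ → α → ℕ) (qo : σ → ℕ)
    (q : σ → ρ → ℕ) (τ : α → Option ρ) (s : σ) (A : Finset α) : Finset α :=
  oaOpen acc score qo s A ∪
    Finset.univ.biUnion fun r => oaRes acc score qo q τ s r A

/-- An assignment: each individual gets `none` (unassigned) or a pair
`(s, c)` of an institution and a category (`c = none` is the open category),
such that reserved positions only go to individuals of the corresponding
reported category, all assigned individuals are acceptable at their
institution, and category capacities are respected. -/
def IsAssignment (acc : σ → Finset α) (qo : σ → ℕ) (q : σ → ρ → ℕ)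
    (τ : α → Option ρ) (η : α → Option (σ × Option ρ)) : Prop :=
  (∀ i s c, η i = some (s, c) → c = none ∨ c = τ i) ∧
  (∀ i s c, η i = some (s, c) → i ∈ acc s) ∧
  (∀ s, (Finset.univ.filter fun i => η i = some (s, none)).card ≤ qo s) ∧
  (∀ s r, (Finset.univ.filter fun i => η i = some (s, some r)).card ≤ q s r)

/-- The matching induced by an assignment: the institution of `i`, if any. -/
def mu (η : α → Option (σ × Option ρ)) (i : α) : Option σ :=
  (η i).map Prod.fst

/-- The set of individuals matched to institution `s`. -/
def muS (η : α → Option (σ × Option ρ)) (s : σ) : Finset α :=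
  Finset.univ.filter fun i => (η i).map Prod.fst = some s

/-- Individual rationality: everyone weakly prefers their assignment to
being unassigned. -/
def IndRational (ui : α → Option σ → ℕ) (η : α → Option (σ × Option ρ)) :
    Prop :=
  ∀ i, ui i none ≤ ui i (mu η i)

/-- Within-category fairness of an assignment: whenever `i` strictly prefers
`s` to their assignment, every open-category position at `s` is held by a
higher-merit individual and, if `i` has reported reserve category `r`, every
category-`r` position at `s` is held by a higher-merit individual. -/
def WithinCatFair (score : σ → α → ℕ) (τ : α → Option ρ)
    (ui : α → Option σ → ℕ) (η : α → Option (σ × Option ρ)) : Prop :=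
  ∀ i s, ui i (mu η i) < ui i (some s) →
    (∀ j, η j = some (s, none) → score s i < score s j) ∧
    (∀ r, τ i = some r → ∀ j, η j = some (s, some r) → score s i < score s j)

/-- Non-wastefulness of an assignment: whenever `i` strictly prefers `s` to
their assignment and is acceptable at `s`, all positions `i` is eligible for
at `s` are exhausted. -/
def NonWasteful (acc : σ → Finset α) (qo : σ → ℕ) (q : σ → ρ → ℕ)
    (τ : α → Option ρ) (ui : α → Option σ → ℕ)
    (η : α → Option (σ × Option ρ)) : Prop :=
  ∀ i s, ui i (mu η i) < ui i (some s) → i ∈ acc s →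
    (Finset.univ.filter fun j => η j = some (s, none)).card = qo s ∧
    (∀ r, τ i = some r →
      (Finset.univ.filter fun j => η j = some (s, some r)).card = q s r)

/-- The over-and-above principle for an assignment: at each institution, every
holder of an open-category position has higher merit than every holder of a
reserve-category position. -/
def OverAndAbove (score : σ → α → ℕ) (η : α → Option (σ × Option ρ)) : Prop :=
  ∀ s i j (r : ρ), η i = some (s, none) → η j = some (s, some r) →
    score s j < score s i

lemma topk_subset (k : ℕ) (f : α → ℕ) (A : Finset α) : topk k f A ⊆ A :=
  Finset.filter_subset _ _

lemma topk_eq_self {k : ℕ} {f : α → ℕ} {A : Finset α} (h : A.card ≤ k) :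
    topk k f A = A := by
  apply Finset.Subset.antisymm (topk_subset k f A)
  intro i hi
  simp only [topk, mem_filter]
  refine ⟨hi, ?_⟩
  calc (A.filter fun j => f i < f j).card
      ≤ (A.erase i).card := by
        apply Finset.card_le_card
        intro j hj
        simp only [mem_filter] at hj
        exact Finset.mem_erase.2 ⟨fun e => by simp [e] at hj, hj.1⟩
    _ < A.card := Finset.card_erase_lt_of_mem hi
    _ ≤ k := h

/-- Lemma 1. If an assignment `η` is individually rational,
non-wasteful, within-category fair, and satisfies the over-and-above
principle, then the matching `μ` it induces is stable with respect to the
profile of over-and-above choice rules: (1) every individual weakly prefers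
their match to being unassigned; (2) every institution chooses its matched set
from itself; (3) no individual strictly prefers an institution whose
over-and-above choice rule would select them from its matched set plus
themselves. -/
theorem lemma1_stability
    (acc : σ → Finset α) (score : σ → α → ℕ)
    (hscore : ∀ s, Function.Injective (score s))
    (qo : σ → ℕ) (q : σ → ρ → ℕ) (τ : α → Option ρ)
    (ui : α → Option σ → ℕ) (hui : ∀ i, Function.Injective (ui i))
    (η : α → Option (σ × Option ρ))
    (hη : IsAssignment acc qo q τ η)
    (hIR : IndRational ui η)
    (hNW : NonWasteful acc qo q τ ui η)
    (hWCF : WithinCatFair score τ ui η)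
    (hOA : OverAndAbove score η) :
    (∀ i, ui i none ≤ ui i (mu η i)) ∧
    (∀ s, oaChosen acc score qo q τ s (muS η s) = muS η s) ∧
    ¬ ∃ i s, ui i (mu η i) < ui i (some s) ∧
        i ∈ oaChosen acc score qo q τ s (insert i (muS η s)) := by

  obtain ⟨hcat, hacc, hqo, hqr⟩ := hη
  have hmem : ∀ (i : α) (s : σ), i ∈ muS η s ↔ ∃ c, η i = some (s, c) := by
    intro i s
    simp only [muS, mem_filter, mem_univ, true_and, Option.map_eq_some_iff]
    constructor
    · rintro ⟨⟨s', c⟩, h1, h2⟩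
      exact ⟨c, by simpa [← h2] using h1⟩
    · rintro ⟨c, h⟩; exact ⟨(s, c), h, rfl⟩
  have hmuacc : ∀ s, muS η s ⊆ acc s := by
    intro s i hi
    obtain ⟨c, hc⟩ := (hmem i s).1 hi
    exact hacc i s c hc
  have hAeq : ∀ s, muS η s ∩ acc s = muS η s := fun s =>
    Finset.inter_eq_left.2 (hmuacc s)
  -- open holders are in the open selection of muS
  have hOsub : ∀ s, (Finset.univ.filter fun j => η j = some (s, none)) ⊆
      oaOpen acc score qo s (muS η s) := by
    intro s j hj
    simp only [mem_filter, mem_univ, true_and] at hj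
    have hjmu : j ∈ muS η s := (hmem j s).2 ⟨none, hj⟩
    simp only [oaOpen, topk, hAeq, mem_filter]
    refine ⟨hjmu, ?_⟩
    calc ((muS η s).filter fun k => score s j < score s k).card
        ≤ ((Finset.univ.filter fun k => η k = some (s, none)).erase j).card := by
          apply Finset.card_le_card
          intro k hk
          simp only [mem_filter] at hk
          obtain ⟨c, hc⟩ := (hmem k s).1 hk.1
          rcases c with _ | r
          · refine Finset.mem_erase.2 ⟨fun e => ?_, by simp [hc]⟩
            subst e; exact lt_irrefl _ hk.2
          · exact absurd (hOA s j k r hj hc) (Nat.lt_asymm hk.2)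
      _ < (Finset.univ.filter fun k => η k = some (s, none)).card :=
          Finset.card_erase_lt_of_mem (by simp [hj])
      _ ≤ qo s := hqo s
  refine ⟨hIR, ?_, ?_⟩
  · -- Part 2
    intro s
    apply Finset.Subset.antisymm
    · intro i hi
      simp only [oaChosen, mem_union, mem_biUnion] at hi
      rcases hi with hi | ⟨r, _, hi⟩
      · exact (hAeq s) ▸ topk_subset _ _ _ hi
      · have := topk_subset _ _ _ hi
        simp only [mem_filter, mem_sdiff, hAeq] at this
        exact this.1.1
    · intro i hi
      simp only [oaChosen, mem_union, mem_biUnion]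
      by_cases hio : i ∈ oaOpen acc score qo s (muS η s)
      · exact Or.inl hio
      obtain ⟨c, hc⟩ := (hmem i s).1 hi
      rcases c with _ | r
      · exact absurd (hOsub s (by simp [hc])) hio
      have hti : τ i = some r := by
        rcases hcat i s (some r) hc with h | h
        · exact absurd h (by simp)
        · exact h.symm
      refine Or.inr ⟨r, mem_univ r, ?_⟩
      have hFsub : (((muS η s ∩ acc s) \ oaOpen acc score qo s (muS η s)).filter
          fun k => τ k = some r) ⊆ Finset.univ.filter fun k => η k = some (s, some r) := by
        intro k hk
        simp only [mem_filter, mem_sdiff, hAeq] at hk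
        obtain ⟨c', hc'⟩ := (hmem k s).1 hk.1.1
        rcases c' with _ | r'
        · exact absurd (hOsub s (by simp [hc'])) hk.1.2
        have : τ k = some r' := by
          rcases hcat k s (some r') hc' with h | h
          · exact absurd h (by simp)
          · exact h.symm
        rw [this] at hk
        simp only [mem_filter, mem_univ, true_and]
        rw [Option.some_inj.1 hk.2] at hc'; exact hc'
      rw [oaRes, topk_eq_self (le_trans (Finset.card_le_card hFsub) (hqr s r))]
      simp only [mem_filter, mem_sdiff, hAeq]
      exact ⟨⟨hi, hio⟩, hti⟩
  · -- Part 3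
    rintro ⟨i, s, hpref, hch⟩
    have hinot : i ∉ muS η s := by
      intro h
      simp only [muS, mem_filter, mem_univ, true_and] at h
      rw [mu, h] at hpref
      exact lt_irrefl _ hpref
    set A := insert i (muS η s) with hA
    have hiacc : i ∈ acc s := by
      simp only [oaChosen, mem_union, mem_biUnion] at hch
      rcases hch with h | ⟨r, _, h⟩
      · exact (Finset.mem_inter.1 (topk_subset _ _ _ h)).2
      · have := topk_subset _ _ _ h
        simp only [mem_filter, mem_sdiff] at this
        exact (Finset.mem_inter.1 this.1.1).2
    obtain ⟨hOcard, hRcard⟩ := hNW i s hpref hiacc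
    obtain ⟨hWo, hWr⟩ := hWCF i s hpref
    have hOA' : (Finset.univ.filter fun j => η j = some (s, none)) ⊆ A ∩ acc s := by
      intro j hj
      simp only [mem_filter, mem_univ, true_and] at hj
      exact Finset.mem_inter.2 ⟨Finset.mem_insert_of_mem ((hmem j s).2 ⟨none, hj⟩),
        hacc j s none hj⟩
    -- no reserve holder at s is in oaOpen A
    have hnores : ∀ j r, η j = some (s, some r) → j ∉ oaOpen acc score qo s A := by
      intro j r hj hjo
      simp only [oaOpen, topk, mem_filter] at hjo
      have hsub : (Finset.univ.filter fun k => η k = some (s, none)) ⊆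
          ((A ∩ acc s).filter fun k => score s j < score s k) := by
        intro k hk
        simp only [mem_filter, mem_univ, true_and] at hk
        exact Finset.mem_filter.2 ⟨hOA' (by simp [hk]), hOA s k j r hk hj⟩
      have := Finset.card_le_card hsub
      rw [hOcard] at this
      exact absurd hjo.2 (not_lt.2 this)
    simp only [oaChosen, mem_union, mem_biUnion] at hch
    rcases hch with h | ⟨r, _, h⟩
    · -- open case
      simp only [oaOpen, topk, mem_filter] at h
      have hsub : (Finset.univ.filter fun k => η k = some (s, none)) ⊆
          ((A ∩ acc s).filter fun k => score s i < score s k) := by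
        intro k hk
        simp only [mem_filter, mem_univ, true_and] at hk
        exact Finset.mem_filter.2 ⟨hOA' (by simp [hk]), hWo k hk⟩
      have := Finset.card_le_card hsub
      rw [hOcard] at this
      exact absurd h.2 (not_lt.2 this)
    · -- reserve case
      simp only [oaRes, topk, mem_filter, mem_sdiff] at h
      obtain ⟨⟨_, hti'⟩, hcard⟩ := h
      have hsub : (Finset.univ.filter fun k => η k = some (s, some r)) ⊆
          ((((A ∩ acc s) \ oaOpen acc score qo s A).filter fun k => τ k = some r).filter
            fun k => score s i < score s k) := by
        intro k hk
        simp only [mem_filter, mem_univ, true_and] at hk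
        have htk : τ k = some r := by
          rcases hcat k s (some r) hk with h' | h'
          · exact absurd h' (by simp)
          · exact h'.symm
        refine Finset.mem_filter.2 ⟨Finset.mem_filter.2 ⟨Finset.mem_sdiff.2
          ⟨Finset.mem_inter.2 ⟨Finset.mem_insert_of_mem ((hmem k s).2 ⟨some r, hk⟩),
            hacc k s (some r) hk⟩, hnores k r hk⟩, htk⟩, hWr r hti' k hk⟩
      have := Finset.card_le_card hsub
      rw [hRcard r hti'] at this
      exact absurd hcard (not_lt.2 this)
end

section
/- The DA-OA mechanism is non-wasteful: for every profile of individual preferences and reported category memberships, the assignment η produced by DA-OA satisfies: for every pair (i, s) with s P_i μ(i) and i acceptable at s, all position categories i is eligible for at s are exhausted, i.e. |{j : (j, o) ∈ η(s)}| = q_s^o and, if the reported type of i is r ∈ R, |{j : (j, r) ∈ η(s)}| = q_s^r. -/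
open Finset

/- `α` : individuals, `σ` : institutions, `ρ` : reserve categories.
Merit at institution `s` is given by an injective score `score s : α → ℕ`
(higher score = higher merit, `i ≻_s j` iff `score s j < score s i`).
Reported category membership is `τ : α → Option ρ` (`none` = general
category).  Preferences of individual `i` over `Option σ` (`none` = being
unassigned) are given by an injective utility `ui i : Option σ → ℕ`. -/
variable {α σ ρ : Type*} [Fintype α] [DecidableEq α]
  [Fintype σ] [DecidableEq σ] [Fintype ρ] [DecidableEq ρ]

/-- The best (reported-)acceptable institution of individual `i` that has not
yet rejected `i` (rejections recorded in `D`); `none` if there is none. -/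
noncomputable def best (ui : α → Option σ → ℕ) (i : α) (D : Finset σ) : Option σ :=
  ((Finset.univ.filter fun s => s ∉ D ∧ ui i none < ui i (some s)).toList).argmax
    fun s => ui i (some s)

/-- The applicants of institution `s` in the current step of deferred
acceptance, given the rejections `D` so far. -/
noncomputable def apps (ui : α → Option σ → ℕ) (D : α → Finset σ) (s : σ) : Finset α :=
  Finset.univ.filter fun i => best ui i (D i) = some s

/-- One step of the DA-OA algorithm: each individual proposes to their best
institution that has not rejected them yet, and each institution `s` rejects
the proposers not chosen by its over-and-above choice rule. -/
noncomputable def daStep (acc : σ → Finset α) (score : σ → α → ℕ) (qo : σ → ℕ)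
    (q : σ → ρ → ℕ) (τ : α → Option ρ) (ui : α → Option σ → ℕ)
    (D : α → Finset σ) : α → Finset σ := fun i =>
  D i ∪ Finset.univ.filter fun s =>
    best ui i (D i) = some s ∧ i ∉ oaChosen acc score qo q τ s (apps ui D s)

/-- The rejection state of the DA-OA algorithm after enough steps to
guarantee that a fixed point (no further rejections) has been reached. -/
noncomputable def daState (acc : σ → Finset α) (score : σ → α → ℕ) (qo : σ → ℕ)
    (q : σ → ρ → ℕ) (τ : α → Option ρ) (ui : α → Option σ → ℕ) :
    α → Finset σ :=
  (daStep acc score qo q τ ui)^[Fintype.card α * Fintype.card σ + 1]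
    fun _ => ∅

/-- The outcome of the DA-OA mechanism: each individual finally held by an
institution is assigned the institution-category pair under which the
over-and-above choice rule last selected them; everyone else gets `none`. -/
noncomputable def daAssign (acc : σ → Finset α) (score : σ → α → ℕ) (qo : σ → ℕ)
    (q : σ → ρ → ℕ) (τ : α → Option ρ) (ui : α → Option σ → ℕ) :
    α → Option (σ × Option ρ) := fun i =>
  match best ui i (daState acc score qo q τ ui i) with
  | none => none
  | some s =>
    if i ∈ oaOpen acc score qo s (apps ui (daState acc score qo q τ ui) s) then
      some (s, none)
    else
      match τ i with
      | none => none
      | some r =>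
        if i ∈ oaRes acc score qo q τ s r
            (apps ui (daState acc score qo q τ ui) s) then
          some (s, some r)
        else none

set_option linter.unusedSectionVars false
section Aux

lemma lt_of_not_mem_topk {k : ℕ} {f : α → ℕ} (hf : Function.Injective f)
    {A : Finset α} {j x : α} (hj : j ∈ A) (hjn : j ∉ topk k f A)
    (hx : x ∈ topk k f A) : f j < f x := by
  simp only [topk, Finset.mem_filter] at hjn hx
  have hxk := hx.2
  have hjk : ¬ (A.filter fun y => f j < f y).card < k := fun h => hjn ⟨hj, h⟩
  rcases lt_trichotomy (f j) (f x) with h | h | h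
  · exact h
  · exact absurd (hf h) (by rintro rfl; exact hjn hx)
  · exfalso
    have hsub : (A.filter fun y => f j < f y) ⊆ (A.filter fun y => f x < f y) := by
      intro y hy
      simp only [Finset.mem_filter] at hy ⊢
      exact ⟨hy.1, h.trans hy.2⟩
    exact hjk (lt_of_le_of_lt (Finset.card_le_card hsub) hxk)

lemma card_topk_le {k : ℕ} {f : α → ℕ} (hf : Function.Injective f)
    (A : Finset α) : (topk k f A).card ≤ k := by
  rcases (topk k f A).eq_empty_or_nonempty with h | h
  · simp [h]
  · obtain ⟨m, hm, hmin⟩ := Finset.exists_min_image (topk k f A) f h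
    have hsub : (topk k f A).erase m ⊆ A.filter fun y => f m < f y := by
      intro x hx
      have hxm := Finset.mem_of_mem_erase hx
      have hne : x ≠ m := Finset.ne_of_mem_erase hx
      simp only [Finset.mem_filter]
      refine ⟨topk_subset k f A hxm, ?_⟩
      rcases lt_or_eq_of_le (hmin x hxm) with h' | h'
      · exact h'
      · exact absurd (hf h'.symm) hne
    have hmk : (A.filter fun y => f m < f y).card < k :=
      (Finset.mem_filter.mp hm).2
    have := Finset.card_le_card hsub
    rw [Finset.card_erase_of_mem hm] at this
    omega

lemma card_topk_of_not_mem {k : ℕ} {f : α → ℕ} (hf : Function.Injective f)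
    {A : Finset α} {i : α} (hi : i ∈ A) (hni : i ∉ topk k f A) :
    (topk k f A).card = k := by
  refine le_antisymm (card_topk_le hf A) ?_
  set E := A.filter (fun j => j ∉ topk k f A) with hE
  have hiE : i ∈ E := Finset.mem_filter.mpr ⟨hi, hni⟩
  obtain ⟨j₀, hj₀, hmax⟩ := Finset.exists_max_image E f ⟨i, hiE⟩
  have hj₀A : j₀ ∈ A := (Finset.mem_filter.mp hj₀).1
  have hj₀n : j₀ ∉ topk k f A := (Finset.mem_filter.mp hj₀).2
  have hcard : k ≤ (A.filter fun y => f j₀ < f y).card := by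
    by_contra h
    exact hj₀n (Finset.mem_filter.mpr ⟨hj₀A, by omega⟩)
  refine hcard.trans (Finset.card_le_card ?_)
  intro y hy
  simp only [Finset.mem_filter] at hy
  by_contra hyn
  exact absurd (hmax y (Finset.mem_filter.mpr ⟨hy.1, hyn⟩)) (not_le.mpr hy.2)

lemma card_topk_mono {k : ℕ} {f : α → ℕ} (hf : Function.Injective f)
    {C B : Finset α} (h : topk k f C ⊆ B) :
    (topk k f C).card ≤ (topk k f B).card := by
  by_cases hB : ∀ x ∈ B, x ∈ topk k f B
  · exact Finset.card_le_card fun x hx => hB x (h hx)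
  · push_neg at hB
    obtain ⟨x, hxB, hxn⟩ := hB
    rw [card_topk_of_not_mem hf hxB hxn]
    exact card_topk_le hf C

lemma best_spec {ui : α → Option σ → ℕ} {i : α} {D : Finset σ} {s : σ}
    (h : best ui i D = some s) : s ∉ D ∧ ui i none < ui i (some s) := by
  have := List.argmax_mem (f := fun s => ui i (some s)) (m := s) h
  simpa only [Finset.mem_toList, Finset.mem_filter, Finset.mem_univ, true_and] using this

lemma best_le {ui : α → Option σ → ℕ} {i : α} {D : Finset σ} {s s' : σ}
    (h : best ui i D = some s) (h1 : s' ∉ D) (h2 : ui i none < ui i (some s')) :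
    ui i (some s') ≤ ui i (some s) :=
  List.le_of_mem_argmax (l := (Finset.univ.filter fun t => t ∉ D ∧ ui i none < ui i (some t)).toList)
    (by simp [h1, h2]) h

lemma best_isSome {ui : α → Option σ → ℕ} {i : α} {D : Finset σ} {s' : σ}
    (h1 : s' ∉ D) (h2 : ui i none < ui i (some s')) :
    ∃ s, best ui i D = some s := by
  cases hb : best ui i D with
  | some s => exact ⟨s, rfl⟩
  | none =>
    exfalso
    have hl := List.argmax_eq_none.mp hb
    have : s' ∈ (Finset.univ.filter fun s => s ∉ D ∧ ui i none < ui i (some s)).toList := by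
      simp [h1, h2]
    rw [hl] at this
    exact absurd this List.not_mem_nil

end Aux

section Aux2

variable (acc : σ → Finset α) (score : σ → α → ℕ) (qo : σ → ℕ)
  (q : σ → ρ → ℕ) (τ : α → Option ρ) (ui : α → Option σ → ℕ)

lemma oaChosen_subset (s : σ) (A : Finset α) :
    oaChosen acc score qo q τ s A ⊆ A ∩ acc s := by
  apply Finset.union_subset
  · exact topk_subset _ _ _
  · apply Finset.biUnion_subset.mpr
    intro r _
    intro x hx
    have := topk_subset _ _ _ hx
    have := (Finset.mem_filter.mp this).1
    exact Finset.sdiff_subset this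

lemma mem_apps {D : α → Finset σ} {i : α} {s : σ} :
    i ∈ apps ui D s ↔ best ui i (D i) = some s := by
  simp [apps]

lemma daStep_eq_of_chosen {D : α → Finset σ} {i : α} {s : σ}
    (hb : best ui i (D i) = some s)
    (hc : i ∈ oaChosen acc score qo q τ s (apps ui D s)) :
    daStep acc score qo q τ ui D i = D i := by
  apply Finset.union_eq_left.mpr
  intro s' hs'
  simp only [Finset.mem_filter, Finset.mem_univ, true_and] at hs'
  rw [hb] at hs'
  obtain ⟨h1, h2⟩ := hs'
  cases Option.some.inj h1
  exact absurd hc h2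

lemma chosen_subset_apps_next (D : α → Finset σ) (s : σ) :
    oaChosen acc score qo q τ s (apps ui D s) ⊆
      apps ui (daStep acc score qo q τ ui D) s := by
  intro i hi
  have hiA : i ∈ apps ui D s :=
    (Finset.mem_inter.mp (oaChosen_subset acc score qo q τ s _ hi)).1
  have hb : best ui i (D i) = some s := (mem_apps ui).mp hiA
  rw [mem_apps]
  rw [daStep_eq_of_chosen acc score qo q τ ui hb hi]
  exact hb

lemma subset_daStep (D : α → Finset σ) (i : α) : D i ⊆ daStep acc score qo q τ ui D i :=
  Finset.subset_union_left

lemma daState_fixed :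
    daStep acc score qo q τ ui (daState acc score qo q τ ui) =
      daState acc score qo q τ ui := by
  set F := daStep acc score qo q τ ui with hF
  set z : α → Finset σ := fun _ => ∅ with hz
  set m : (α → Finset σ) → ℕ := fun D => ∑ i, (D i).card with hm
  have hlt : ∀ D, F D ≠ D → m D < m (F D) := by
    intro D hne
    have hex : ∃ i, F D i ≠ D i := by
      by_contra h
      push_neg at h
      exact hne (funext h)
    obtain ⟨i, hi⟩ := hex
    apply Finset.sum_lt_sum (fun j _ => Finset.card_le_card (subset_daStep acc score qo q τ ui D j))
    exact ⟨i, Finset.mem_univ i, Finset.card_lt_card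
      (lt_of_le_of_ne (subset_daStep acc score qo q τ ui D i) (Ne.symm hi))⟩
  have hbound : ∀ D : α → Finset σ, m D ≤ Fintype.card α * Fintype.card σ := by
    intro D
    calc m D ≤ ∑ _i : α, Fintype.card σ :=
          Finset.sum_le_sum fun i _ => Finset.card_le_univ (D i)
      _ = Fintype.card α * Fintype.card σ := by
          simp [Finset.sum_const, Finset.card_univ, mul_comm]
  have key : ∀ n : ℕ, F (F^[n] z) = F^[n] z ∨ n ≤ m (F^[n] z) := by
    intro n
    induction n with
    | zero => exact Or.inr (Nat.zero_le _)
    | succ n ih =>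
      by_cases h : F (F^[n] z) = F^[n] z
      · left
        rw [Function.iterate_succ_apply', h, h]
      · rcases ih with h' | h'
        · exact absurd h' h
        · right
          rw [Function.iterate_succ_apply']
          have := hlt (F^[n] z) h
          omega
  rcases key (Fintype.card α * Fintype.card σ + 1) with h | h
  · exact h
  · exfalso
    have := hbound (F^[Fintype.card α * Fintype.card σ + 1] z)
    omega

lemma daState_chosen {i : α} {s : σ}
    (hb : best ui i (daState acc score qo q τ ui i) = some s) :
    i ∈ oaChosen acc score qo q τ s (apps ui (daState acc score qo q τ ui) s) := by
  by_contra hc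
  have hs : s ∈ daStep acc score qo q τ ui (daState acc score qo q τ ui) i := by
    apply Finset.mem_union_right
    simp only [Finset.mem_filter, Finset.mem_univ, true_and]
    exact ⟨hb, hc⟩
  rw [daState_fixed] at hs
  exact (best_spec hb).1 hs

lemma daState_transition {i : α} {s : σ}
    (hs : s ∈ daState acc score qo q τ ui i) :
    ∃ n < Fintype.card α * Fintype.card σ + 1,
      best ui i ((daStep acc score qo q τ ui)^[n] (fun _ => ∅) i) = some s ∧
      i ∉ oaChosen acc score qo q τ s
        (apps ui ((daStep acc score qo q τ ui)^[n] (fun _ => ∅)) s) := by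
  set F := daStep acc score qo q τ ui with hF
  set z : α → Finset σ := fun _ => ∅ with hz
  suffices h : ∀ n : ℕ, s ∈ F^[n] z i → ∃ k < n, best ui i (F^[k] z i) = some s ∧
      i ∉ oaChosen acc score qo q τ s (apps ui (F^[k] z) s) by
    exact h _ hs
  intro n
  induction n with
  | zero => intro h; simp [hz] at h
  | succ n ih =>
    intro h
    by_cases h' : s ∈ F^[n] z i
    · obtain ⟨k, hk, hh⟩ := ih h'
      exact ⟨k, Nat.lt_succ_of_lt hk, hh⟩
    · refine ⟨n, Nat.lt_succ_self n, ?_⟩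
      rw [Function.iterate_succ_apply'] at h
      have hmem : s ∈ Finset.univ.filter fun t =>
          best ui i (F^[n] z i) = some t ∧
            i ∉ oaChosen acc score qo q τ t (apps ui (F^[n] z) t) := by
        rcases Finset.mem_union.mp h with h2 | h2
        · exact absurd h2 h'
        · exact h2
      have := (Finset.mem_filter.mp hmem).2
      exact this

end Aux2

section Aux3

variable (acc : σ → Finset α) (score : σ → α → ℕ) (qo : σ → ℕ)
  (q : σ → ρ → ℕ) (τ : α → Option ρ) (ui : α → Option σ → ℕ)

lemma counts_mono {s : σ} (hs : Function.Injective (score s)) (D : α → Finset σ) :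
    (oaOpen acc score qo s (apps ui D s)).card ≤
      (oaOpen acc score qo s (apps ui (daStep acc score qo q τ ui D) s)).card ∧
    ∀ r, (oaRes acc score qo q τ s r (apps ui D s)).card ≤
      (oaRes acc score qo q τ s r (apps ui (daStep acc score qo q τ ui D) s)).card := by
  set A := apps ui D s with hA
  set A' := apps ui (daStep acc score qo q τ ui D) s with hA'
  have hCh : oaChosen acc score qo q τ s A ⊆ A' := chosen_subset_apps_next acc score qo q τ ui D s
  have hOsub : oaOpen acc score qo s A ⊆ A' ∩ acc s := by
    intro x hx
    refine Finset.mem_inter.mpr ⟨hCh (Finset.mem_union_left _ hx), ?_⟩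
    exact (Finset.mem_inter.mp (topk_subset _ _ _ hx)).2
  constructor
  · exact card_topk_mono hs hOsub
  · intro r
    apply card_topk_mono hs
    intro x hx
    have hxbase := topk_subset _ _ _ hx
    have hxd := Finset.mem_filter.mp hxbase
    have hxr : τ x = some r := hxd.2
    have hxAacc := Finset.mem_sdiff.mp hxd.1
    have hxA : x ∈ A ∩ acc s := hxAacc.1
    have hxO : x ∉ oaOpen acc score qo s A := hxAacc.2
    have hxA' : x ∈ A' :=
      hCh (Finset.mem_union_right _ (Finset.mem_biUnion.mpr ⟨r, Finset.mem_univ r, hx⟩))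
    have hxacc : x ∈ acc s := (Finset.mem_inter.mp hxA).2
    have hcardO : (oaOpen acc score qo s A).card = qo s :=
      card_topk_of_not_mem hs hxA hxO
    have hxO' : x ∉ oaOpen acc score qo s A' := by
      intro hmem
      have hlt : ((A' ∩ acc s).filter fun y => score s x < score s y).card < qo s :=
        (Finset.mem_filter.mp hmem).2
      have hsub : oaOpen acc score qo s A ⊆
          (A' ∩ acc s).filter fun y => score s x < score s y := by
        intro y hy
        exact Finset.mem_filter.mpr ⟨hOsub hy, lt_of_not_mem_topk hs hxA hxO hy⟩
      have := Finset.card_le_card hsub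
      omega
    exact Finset.mem_filter.mpr
      ⟨Finset.mem_sdiff.mpr ⟨Finset.mem_inter.mpr ⟨hxA', hxacc⟩, hxO'⟩, hxr⟩

lemma daAssign_eq_open {i : α} {s : σ}
    (hb : best ui i (daState acc score qo q τ ui i) = some s)
    (ho : i ∈ oaOpen acc score qo s (apps ui (daState acc score qo q τ ui) s)) :
    daAssign acc score qo q τ ui i = some (s, none) := by
  unfold daAssign
  rw [hb]
  dsimp only
  simp [ho]

lemma daAssign_eq_res {i : α} {s : σ} {r : ρ}
    (hb : best ui i (daState acc score qo q τ ui i) = some s)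
    (hno : i ∉ oaOpen acc score qo s (apps ui (daState acc score qo q τ ui) s))
    (hτ : τ i = some r)
    (hr : i ∈ oaRes acc score qo q τ s r (apps ui (daState acc score qo q τ ui) s)) :
    daAssign acc score qo q τ ui i = some (s, some r) := by
  unfold daAssign
  rw [hb]
  dsimp only
  rw [if_neg hno, hτ]
  dsimp only
  rw [if_pos hr]

lemma daAssign_inv {i : α} {s : σ} {c : Option ρ}
    (h : daAssign acc score qo q τ ui i = some (s, c)) :
    best ui i (daState acc score qo q τ ui i) = some s ∧
      ((c = none ∧ i ∈ oaOpen acc score qo s (apps ui (daState acc score qo q τ ui) s)) ∨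
        (∃ r, c = some r ∧ τ i = some r ∧
          i ∉ oaOpen acc score qo s (apps ui (daState acc score qo q τ ui) s) ∧
          i ∈ oaRes acc score qo q τ s r (apps ui (daState acc score qo q τ ui) s))) := by
  unfold daAssign at h
  cases hb : best ui i (daState acc score qo q τ ui i) with
  | none => rw [hb] at h; simp at h
  | some s₀ =>
    rw [hb] at h
    dsimp only at h
    by_cases ho : i ∈ oaOpen acc score qo s₀ (apps ui (daState acc score qo q τ ui) s₀)
    · rw [if_pos ho] at h
      have h2 := Option.some.inj h
      have hss : s₀ = s := congrArg Prod.fst h2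
      have hcc : (none : Option ρ) = c := congrArg Prod.snd h2
      subst hss; subst hcc
      exact ⟨rfl, Or.inl ⟨rfl, ho⟩⟩
    · rw [if_neg ho] at h
      cases hτ : τ i with
      | none => rw [hτ] at h; simp at h
      | some r =>
        rw [hτ] at h
        dsimp only at h
        by_cases hr : i ∈ oaRes acc score qo q τ s₀ r (apps ui (daState acc score qo q τ ui) s₀)
        · rw [if_pos hr] at h
          have h2 := Option.some.inj h
          have hss : s₀ = s := congrArg Prod.fst h2
          have hcc : (some r : Option ρ) = c := congrArg Prod.snd h2
          subst hss; subst hcc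
          exact ⟨rfl, Or.inr ⟨r, rfl, rfl, ho, hr⟩⟩
        · rw [if_neg hr] at h; simp at h

lemma filter_open_eq (s : σ) :
    (Finset.univ.filter fun j => daAssign acc score qo q τ ui j = some (s, none)) =
      oaOpen acc score qo s (apps ui (daState acc score qo q τ ui) s) := by
  ext j
  simp only [Finset.mem_filter, Finset.mem_univ, true_and]
  constructor
  · intro h
    obtain ⟨hb, hcase⟩ := daAssign_inv acc score qo q τ ui h
    rcases hcase with ⟨-, ho⟩ | ⟨r, hc, -, -, -⟩
    · exact ho
    · exact absurd hc (by simp)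
  · intro h
    have hjA : j ∈ apps ui (daState acc score qo q τ ui) s :=
      (Finset.mem_inter.mp (topk_subset _ _ _ h)).1
    exact daAssign_eq_open acc score qo q τ ui ((mem_apps ui).mp hjA) h

lemma filter_res_eq (s : σ) (r : ρ) :
    (Finset.univ.filter fun j => daAssign acc score qo q τ ui j = some (s, some r)) =
      oaRes acc score qo q τ s r (apps ui (daState acc score qo q τ ui) s) := by
  ext j
  simp only [Finset.mem_filter, Finset.mem_univ, true_and]
  constructor
  · intro h
    obtain ⟨hb, hcase⟩ := daAssign_inv acc score qo q τ ui h
    rcases hcase with ⟨hc, -⟩ | ⟨r', hc, -, -, hr⟩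
    · exact absurd hc (by simp)
    · have : r = r' := Option.some.inj hc
      subst this
      exact hr
  · intro h
    have hbase := Finset.mem_filter.mp (topk_subset _ _ _ h)
    have hd := Finset.mem_sdiff.mp hbase.1
    have hjA : j ∈ apps ui (daState acc score qo q τ ui) s :=
      (Finset.mem_inter.mp hd.1).1
    exact daAssign_eq_res acc score qo q τ ui ((mem_apps ui).mp hjA) hd.2 hbase.2 h

end Aux3

/-- The DA-OA mechanism is non-wasteful: for every profile
of (strict) preferences and reported category memberships, whenever an
individual `i` strictly prefers an institution `s` to their DA-OA assignment
and is acceptable at `s`, all position categories `i` is eligible for at `s`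
are exhausted: all `qo s` open-category positions are filled and, if `i`'s
reported category is `r`, all `q s r` category-`r` positions are filled. -/
theorem daOA_non_wasteful
    (acc : σ → Finset α) (score : σ → α → ℕ)
    (hscore : ∀ s, Function.Injective (score s))
    (qo : σ → ℕ) (q : σ → ρ → ℕ) (τ : α → Option ρ)
    (ui : α → Option σ → ℕ) (hui : ∀ i, Function.Injective (ui i)) :
    NonWasteful acc qo q τ ui (daAssign acc score qo q τ ui) := by
  intro i s hpref hacc
  set F := daStep acc score qo q τ ui with hF
  set z : α → Finset σ := (fun _ => ∅) with hz
  set N := Fintype.card α * Fintype.card σ + 1 with hN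
  have hDFdef : daState acc score qo q τ ui = F^[N] z := rfl
  have hnone : ui i none < ui i (some s) := by
    cases hη : daAssign acc score qo q τ ui i with
    | none =>
      have hmu : mu (daAssign acc score qo q τ ui) i = none := by simp [mu, hη]
      rwa [hmu] at hpref
    | some p =>
      obtain ⟨s', c⟩ := p
      have hb := (daAssign_inv acc score qo q τ ui hη).1
      have h2 := (best_spec hb).2
      have hmu : mu (daAssign acc score qo q τ ui) i = some s' := by simp [mu, hη]
      rw [hmu] at hpref
      exact h2.trans hpref
  have hsD : s ∈ daState acc score qo q τ ui i := by
    by_contra hs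
    obtain ⟨s₀, hb⟩ := best_isSome hs hnone
    have hle := best_le hb hs hnone
    have hch := daState_chosen acc score qo q τ ui hb
    have hex : ∃ c, daAssign acc score qo q τ ui i = some (s₀, c) := by
      rcases Finset.mem_union.mp hch with ho | hr
      · exact ⟨none, daAssign_eq_open acc score qo q τ ui hb ho⟩
      · obtain ⟨r, -, hr⟩ := Finset.mem_biUnion.mp hr
        have hbase := Finset.mem_filter.mp (topk_subset _ _ _ hr)
        have hd := Finset.mem_sdiff.mp hbase.1
        exact ⟨some r, daAssign_eq_res acc score qo q τ ui hb hd.2 hbase.2 hr⟩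
    obtain ⟨c, hη⟩ := hex
    have hmu : mu (daAssign acc score qo q τ ui) i = some s₀ := by simp [mu, hη]
    rw [hmu] at hpref
    exact absurd hpref (not_lt.mpr hle)
  obtain ⟨n, hnN, hbn, hnc⟩ := daState_transition acc score qo q τ ui hsD
  have hiA : i ∈ apps ui (F^[n] z) s := (mem_apps ui).mpr hbn
  have hiAacc : i ∈ apps ui (F^[n] z) s ∩ acc s := Finset.mem_inter.mpr ⟨hiA, hacc⟩
  have hiO : i ∉ oaOpen acc score qo s (apps ui (F^[n] z) s) :=
    fun h => hnc (Finset.mem_union_left _ h)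
  have hopen_n : (oaOpen acc score qo s (apps ui (F^[n] z) s)).card = qo s :=
    card_topk_of_not_mem (hscore s) hiAacc hiO
  have mono : ∀ m k, m ≤ k →
      (oaOpen acc score qo s (apps ui (F^[m] z) s)).card ≤
        (oaOpen acc score qo s (apps ui (F^[k] z) s)).card ∧
      ∀ r, (oaRes acc score qo q τ s r (apps ui (F^[m] z) s)).card ≤
        (oaRes acc score qo q τ s r (apps ui (F^[k] z) s)).card := by
    intro m k hmk
    induction k, hmk using Nat.le_induction with
    | base => exact ⟨le_refl _, fun r => le_refl _⟩
    | succ k hk ih =>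
      have hstep := counts_mono acc score qo q τ ui (hscore s) (F^[k] z)
      rw [Function.iterate_succ_apply']
      exact ⟨ih.1.trans hstep.1, fun r => (ih.2 r).trans (hstep.2 r)⟩
  constructor
  · rw [filter_open_eq acc score qo q τ ui s]
    rw [hDFdef]
    refine le_antisymm (card_topk_le (hscore s) _) ?_
    have hm := (mono n N hnN.le).1
    rw [hopen_n] at hm
    exact hm
  · intro r hτ
    have hiF : i ∈ ((apps ui (F^[n] z) s ∩ acc s) \ oaOpen acc score qo s (apps ui (F^[n] z) s)).filter (fun x => τ x = some r) :=
      Finset.mem_filter.mpr ⟨Finset.mem_sdiff.mpr ⟨hiAacc, hiO⟩, hτ⟩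
    have hiR : i ∉ oaRes acc score qo q τ s r (apps ui (F^[n] z) s) :=
      fun h => hnc (Finset.mem_union_right _ (Finset.mem_biUnion.mpr ⟨r, Finset.mem_univ r, h⟩))
    have hres_n : (oaRes acc score qo q τ s r (apps ui (F^[n] z) s)).card = q s r :=
      card_topk_of_not_mem (hscore s) hiF hiR
    rw [filter_res_eq acc score qo q τ ui s r]
    rw [hDFdef]
    refine le_antisymm (card_topk_le (hscore s) _) ?_
    have hm := (mono n N hnN.le).2 r
    rw [hres_n] at hm
    exact hm
end
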